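/- Let v be an octonion with ‖v‖ = 1. Then for every octonion x, v̂ ∘ x̂ ∘ v̂ = ŵ where w = x − 2⟨x,v⟩v. Equivalently (since v̂⁻¹ = −v̂), conjugation of x̂ by v̂ fixes v̂ and acts as −1 on {x̂ : ⟨x,v⟩ = 0}: v̂ ∘ x̂ ∘ v̂⁻¹ equals the hat of 2⟨x,v⟩v − x. -/

import Mathlib

noncomputable section

/-- The octonions, realized as pairs of real quaternions (Cayley–Dickson construction). -/
abbrev Octonion : Type := Quaternion ℝ × Quaternion ℝ

/-- Octonion multiplication: `(a,b)·(c,d) = (a·c − conj(d)·b, d·a + b·conj(c))`. -/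
def omul (x y : Octonion) : Octonion :=
  (x.1 * y.1 - star y.2 * x.2, y.2 * x.1 + x.2 * star y.1)

/-- Octonion conjugation: `conj (a,b) = (conj a, −b)`. -/
def oconj (x : Octonion) : Octonion := (star x.1, -x.2)

/-- The unit octonion `1 = (1,0)`. -/
def oone : Octonion := (1, 0)

/-- The real inner product `⟨(a,b),(c,d)⟩ = Re(a·conj c) + Re(b·conj d)` on the octonions. -/
def oinner (x y : Octonion) : ℝ := (x.1 * star y.1).re + (x.2 * star y.2).re

/-- The Clifford-algebra embedding: `x̂ (y,z) = (−conj(x)·z, x·y)` on `𝕆 × 𝕆`. -/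
def hat (x : Octonion) (p : Octonion × Octonion) : Octonion × Octonion :=
  (-(omul (oconj x) p.2), omul x p.1)

lemma qstar_smul (c : ℝ) (q : Quaternion ℝ) : star (c • q) = c • star q := by
  ext <;> simp

lemma omul_neg_right (x p : Octonion) : omul x (-p) = -omul x p := by
  simp only [omul, Prod.fst_neg, Prod.snd_neg, Prod.neg_mk, Prod.mk.injEq, star_neg]
  constructor <;> noncomm_ring

lemma omul_sub_right (x p q : Octonion) : omul x (p - q) = omul x p - omul x q := by
  simp only [omul, Prod.fst_sub, Prod.snd_sub, Prod.mk_sub_mk, Prod.mk.injEq, star_sub]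
  constructor <;> noncomm_ring

lemma omul_smul_right (c : ℝ) (x p : Octonion) : omul x (c • p) = c • omul x p := by
  simp only [omul, Prod.smul_fst, Prod.smul_snd, Prod.smul_mk, Prod.mk.injEq, star_smul,
    smul_sub, smul_add, mul_smul_comm, smul_mul_assoc, qstar_smul]

lemma omul_sub_left (x y p : Octonion) : omul (x - y) p = omul x p - omul y p := by
  simp only [omul, Prod.fst_sub, Prod.snd_sub, Prod.mk_sub_mk, Prod.mk.injEq]
  constructor <;> noncomm_ring

lemma omul_smul_left (c : ℝ) (x p : Octonion) : omul (c • x) p = c • omul x p := by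
  simp only [omul, Prod.smul_fst, Prod.smul_snd, Prod.smul_mk, Prod.mk.injEq,
    smul_sub, smul_add, mul_smul_comm, smul_mul_assoc]

lemma oconj_sub (x y : Octonion) : oconj (x - y) = oconj x - oconj y := by
  simp only [oconj, Prod.fst_sub, Prod.snd_sub, Prod.mk_sub_mk, Prod.mk.injEq, star_sub]
  exact ⟨trivial, by abel⟩

lemma oconj_smul (c : ℝ) (x : Octonion) : oconj (c • x) = c • oconj x := by
  simp only [oconj, Prod.smul_fst, Prod.smul_snd, Prod.smul_mk, Prod.mk.injEq, star_smul,
    smul_neg, qstar_smul]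

lemma hat_neg_p (x : Octonion) (p : Octonion × Octonion) : hat x (-p) = -(hat x p) := by
  simp only [hat, Prod.fst_neg, Prod.snd_neg, omul_neg_right, Prod.neg_mk, neg_neg]

lemma hat_sub_p (x : Octonion) (p q : Octonion × Octonion) :
    hat x (p - q) = hat x p - hat x q := by
  simp only [hat, Prod.fst_sub, Prod.snd_sub, omul_sub_right, Prod.mk_sub_mk, Prod.mk.injEq]
  exact ⟨by abel, trivial⟩

lemma hat_smul_p (x : Octonion) (c : ℝ) (p : Octonion × Octonion) :
    hat x (c • p) = c • hat x p := by
  simp only [hat, Prod.smul_fst, Prod.smul_snd, omul_smul_right, Prod.smul_mk, smul_neg]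

lemma hat_sub_x (x y : Octonion) (p : Octonion × Octonion) :
    hat (x - y) p = hat x p - hat y p := by
  simp only [hat, oconj_sub, omul_sub_left, Prod.mk_sub_mk, Prod.mk.injEq]
  exact ⟨by abel, trivial⟩

lemma hat_smul_x (c : ℝ) (x : Octonion) (p : Octonion × Octonion) :
    hat (c • x) p = c • hat x p := by
  simp only [hat, oconj_smul, omul_smul_left, Prod.smul_mk, smul_neg]

lemma hat_neg_x (x : Octonion) (p : Octonion × Octonion) : hat (-x) p = -(hat x p) := by
  have h := hat_sub_x 0 x p
  rw [zero_sub] at h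
  rw [h]
  have h0 : hat 0 p = 0 := by
    simp [hat, omul, oconj, Prod.ext_iff]
  rw [h0, zero_sub]

set_option maxHeartbeats 2000000 in
lemma clifford (a b : Octonion) (p : Octonion × Octonion) :
    hat a (hat b p) + hat b (hat a p) = -((2 * oinner a b) • p) := by
  obtain ⟨A,B⟩ := a
  obtain ⟨C,D⟩ := b
  obtain ⟨⟨E,F⟩,⟨G,H⟩⟩ := p
  simp only [hat, omul, oconj, oinner, star_add, star_sub, star_neg,
    star_mul, star_star, Prod.ext_iff, Prod.fst_add, Prod.snd_add,
    Prod.smul_fst, Prod.smul_snd, Prod.fst_neg, Prod.snd_neg, Quaternion.ext_iff,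
    Quaternion.re_mul, Quaternion.imI_mul, Quaternion.imJ_mul, Quaternion.imK_mul,
    Quaternion.re_star, Quaternion.imI_star, Quaternion.imJ_star, Quaternion.imK_star,
    Quaternion.re_neg, Quaternion.imI_neg, Quaternion.imJ_neg, Quaternion.imK_neg,
    Quaternion.re_add, Quaternion.imI_add, Quaternion.imJ_add, Quaternion.imK_add,
    Quaternion.re_sub, Quaternion.imI_sub, Quaternion.imJ_sub, Quaternion.imK_sub,
    Quaternion.re_smul, Quaternion.imI_smul, Quaternion.imJ_smul, Quaternion.imK_smul,
    smul_eq_mul]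
  refine ⟨⟨⟨?_,?_,?_,?_⟩,?_,?_,?_,?_⟩,⟨?_,?_,?_,?_⟩,?_,?_,?_,?_⟩ <;> ring

lemma hat_hat_self (v : Octonion) (q : Octonion × Octonion) :
    hat v (hat v q) = -((oinner v v) • q) := by
  have h := clifford v v q
  have h2 : (2:ℝ) • hat v (hat v q) = (2:ℝ) • (-((oinner v v) • q)) := by
    rw [two_smul, h, smul_neg, smul_smul]
  exact smul_right_injective _ (by norm_num) h2

/-- For a unit octonion `v` and any octonion `x`,
`v̂ ∘ x̂ ∘ v̂ = ŵ` where `w = x − 2⟨x,v⟩v`; equivalently, since `v̂⁻¹ = −v̂`,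
conjugation of `x̂` by `v̂` is the hat of `2⟨x,v⟩v − x`. -/
theorem hat_conj_reflection (v : Octonion) (hv : oinner v v = 1) :
    (∀ (x : Octonion) (p : Octonion × Octonion),
      hat v (hat x (hat v p)) = hat (x - (2 * oinner x v) • v) p) ∧
    (∀ (x : Octonion) (p : Octonion × Octonion),
      hat v (hat x (-(hat v p))) = hat ((2 * oinner x v) • v - x) p) := by
  have key : ∀ (x : Octonion) (p : Octonion × Octonion),
      hat v (hat x (hat v p)) = hat (x - (2 * oinner x v) • v) p := by
    intro x p
    have h1 : hat x (hat v p) = -((2 * oinner x v) • p) - hat v (hat x p) :=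
      eq_sub_of_add_eq (clifford x v p)
    rw [h1, hat_sub_p, hat_neg_p, hat_smul_p, hat_hat_self, hv, one_smul,
      hat_sub_x, hat_smul_x]
    abel
  refine ⟨key, fun x p => ?_⟩
  rw [hat_neg_p, hat_neg_p, key, ← neg_sub, hat_neg_x, neg_neg]
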